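/- arXiv:2206.07862 — 4 statements merged into one kernel-verified Lean document; each statement's English description precedes it below -/
import Mathlib

section
/- Let W = (H, Z) be an ew-system. A model I* of W is optimal (with respect to the recursive argmax definition) if and only if no model of W max-dominates I*; and I* is min-optimal (with respect to the recursive argmin definition) if and only if no model of W min-dominates I*. -/
open scoped Classical

/-- An ew-condition: a set of extended models, an integer weight,
a cost (coefficients) function on evaluations, and a positive integer level. -/
structure EWCond (ι ε : Type*) where
  Mod : Set (ι × ε)
  w : ℤ
  c : ε → ℝ
  lvl : ℕ+

namespace EWCond

variable {ι ε : Type*}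

/-- `I` is a model of the ew-condition `B`. -/
def IsModel (B : EWCond ι ε) (I : ι) : Prop := ∃ ν, (I, ν) ∈ B.Mod

/-- `⟦I ⊨ B⟧`: the weight of `B` if `I` is a model of `B`, and `0` otherwise. -/
noncomputable def costI (B : EWCond ι ε) (I : ι) : ℝ :=
  if B.IsModel I then (B.w : ℝ) else 0

/-- `⟦(I,ν) ⊨ B⟧`: `c(B)(ν)` if `(I,ν)` is an extended model of `B`, and `0` otherwise. -/
noncomputable def costE (B : EWCond ι ε) (p : ι × ε) : ℝ :=
  if p ∈ B.Mod then B.c p.2 else 0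

end EWCond

/-- An ew-system: the extended-model set of its hard theory
together with a finite (multi)set of ew-conditions. -/
structure EWSystem (ι ε : Type*) where
  H : Set (ι × ε)
  Z : Multiset (EWCond ι ε)

namespace EWSystem

variable {ι ε : Type*}

/-- `I` is a model of the ew-system `W`. -/
def IsModel (W : EWSystem ι ε) (I : ι) : Prop := ∃ ν, (I, ν) ∈ W.H

/-- `levels(W)`. -/
noncomputable def levels (W : EWSystem ι ε) : Finset ℕ+ :=
  (W.Z.map EWCond.lvl).toFinset

/-- `Σ_{B ∈ W_l} ⟦I ⊨ B⟧`. -/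
noncomputable def levelCostI (W : EWSystem ι ε) (l : ℕ+) (I : ι) : ℝ :=
  (W.Z.map (fun B => if B.lvl = l then B.costI I else 0)).sum

/-- `Σ_{B ∈ W_l} (⟦I ⊨ B⟧ + ⟦(I,ν) ⊨ B⟧)`. -/
noncomputable def levelCostE (W : EWSystem ι ε) (l : ℕ+) (p : ι × ε) : ℝ :=
  (W.Z.map (fun B => if B.lvl = l then B.costI p.1 + B.costE p else 0)).sum

/-- Elements of `S` at which `f` is `r`-extremal: for `r = (· ≤ ·)` these are
the maximizers of `f` on `S`; for `r = (fun a b => b ≤ a)`, the minimizers. -/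
def argOn {α : Type*} (r : ℝ → ℝ → Prop) (f : α → ℝ) (S : Set α) : Set α :=
  {x ∈ S | ∀ y ∈ S, r (f y) (f x)}

/-- Instantiating `r := maxR` yields the argmax-based (optimal) notions. -/
def maxR : ℝ → ℝ → Prop := fun a b => a ≤ b

/-- Instantiating `r := minR` yields the argmin-based (min-optimal) notions. -/
def minR : ℝ → ℝ → Prop := fun a b => b ≤ a

/-- The levels of `W` strictly greater than `l`, in ascending order. -/
noncomputable def levelsAbove (W : EWSystem ι ε) (l : ℕ+) : List ℕ+ :=
  (W.levels.filter (fun l' => l < l')).sort (· ≤ ·)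

/-- Processing an ascending list `a₁ < a₂ < ⋯ < aₖ` of levels:
`argOn r f_{a₁} (argOn r f_{a₂} (⋯ (argOn r f_{aₖ} (models of W))))`.
Hence `W.chainI r (W.levelsAbove l)` is the set over which the `l`-optimization
ranges: all models of `W` when `l` is the greatest level, and the
`succ(l)`-optimal models otherwise. -/
noncomputable def chainI (W : EWSystem ι ε) (r : ℝ → ℝ → Prop) : List ℕ+ → Set ι
  | [] => {I | W.IsModel I}
  | a :: rest => argOn r (W.levelCostI a) (W.chainI r rest)

/-- `I` is an `l`-optimal (for `r = maxR`; `l`-min-optimal for `r = minR`) model of `W`. -/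
def LOptI (W : EWSystem ι ε) (r : ℝ → ℝ → Prop) (l : ℕ+) (I : ι) : Prop :=
  I ∈ argOn r (W.levelCostI l) (W.chainI r (W.levelsAbove l))

/-- `I` is an optimal (for `r = maxR`; min-optimal for `r = minR`) model of `W`:
a model of `W` that is `l`-optimal for every level `l ∈ levels(W)`. -/
def OptimalI (W : EWSystem ι ε) (r : ℝ → ℝ → Prop) (I : ι) : Prop :=
  W.IsModel I ∧ ∀ l ∈ W.levels, W.LOptI r l I

/-- The extended-model analogue of `chainI`. -/
noncomputable def chainE (W : EWSystem ι ε) (r : ℝ → ℝ → Prop) : List ℕ+ → Set (ι × ε)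
  | [] => W.H
  | a :: rest => argOn r (W.levelCostE a) (W.chainE r rest)

/-- `(I,ν)` is an `l`-optimal (resp. `l`-min-optimal) extended model of `W`. -/
def LOptE (W : EWSystem ι ε) (r : ℝ → ℝ → Prop) (l : ℕ+) (p : ι × ε) : Prop :=
  p ∈ argOn r (W.levelCostE l) (W.chainE r (W.levelsAbove l))

/-- `(I,ν)` is an optimal (resp. min-optimal) extended model of `W`. -/
def OptimalE (W : EWSystem ι ε) (r : ℝ → ℝ → Prop) (p : ι × ε) : Prop :=
  p ∈ W.H ∧ ∀ l ∈ W.levels, W.LOptE r l p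

end EWSystem

variable {ι ε : Type*}

namespace EWSystem

variable {ι ε : Type*}

lemma mem_argOn' {α : Type*} {r : ℝ → ℝ → Prop} {f : α → ℝ} {S : Set α} {x : α} :
    x ∈ argOn r f S ↔ x ∈ S ∧ ∀ y ∈ S, r (f y) (f x) := Iff.rfl

section Rel

variable (W : EWSystem ι ε) {r : ℝ → ℝ → Prop}

lemma chainI_subset : ∀ s : List ℕ+, W.chainI r s ⊆ {I | W.IsModel I}
  | [] => le_refl _
  | a :: t => fun _ hx => chainI_subset t hx.1

variable (htot : ∀ a b : ℝ, r a b ∨ r b a) (hanti : ∀ a b : ℝ, r a b → r b a → a = b)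

include hanti in
lemma chainI_eq_on : ∀ s : List ℕ+, ∀ x ∈ W.chainI r s, ∀ y ∈ W.chainI r s,
    ∀ a ∈ s, W.levelCostI a x = W.levelCostI a y
  | [] => by simp
  | a :: t => by
    rintro x ⟨hxt, hxm⟩ y ⟨hyt, hym⟩ c hc
    rcases List.mem_cons.mp hc with rfl | hct
    · exact hanti _ _ (hym x hxt) (hxm y hyt)
    · exact chainI_eq_on t x hxt y hyt c hct

lemma mem_chainI_of_eq : ∀ s : List ℕ+, ∀ x ∈ W.chainI r s, ∀ y, W.IsModel y →
    (∀ a ∈ s, W.levelCostI a x = W.levelCostI a y) → y ∈ W.chainI r s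
  | [] => fun _ _ y hy _ => hy
  | a :: t => by
    rintro x ⟨hxt, hxm⟩ y hy heq
    refine ⟨mem_chainI_of_eq t x hxt y hy fun b hb => heq b (List.mem_cons_of_mem a hb), ?_⟩
    intro z hz
    rw [← heq a (List.mem_cons_self)]
    exact hxm z hz

include htot hanti in
lemma mem_chainI_iff {x : ι} (hx : W.IsModel x) :
    ∀ {s : List ℕ+}, List.Pairwise (· < ·) s →
    (x ∈ W.chainI r s ↔
      ¬ ∃ y, W.IsModel y ∧ ∃ a ∈ s, (∀ b ∈ s, a < b → W.levelCostI b x = W.levelCostI b y) ∧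
        r (W.levelCostI a x) (W.levelCostI a y) ∧ W.levelCostI a x ≠ W.levelCostI a y) := by
  intro s
  induction s with
  | nil => simpa [EWSystem.chainI] using hx
  | cons a t IH =>
    intro hs
    have ht : List.Pairwise (· < ·) t := hs.of_cons
    have hat : ∀ b ∈ t, a < b := fun b hb => List.rel_of_pairwise_cons hs hb
    constructor
    · rintro ⟨hxt, hxm⟩ ⟨y, hy, c, hc, heqs, hr, hne⟩
      rcases List.mem_cons.mp hc with rfl | hct
      · have hyt : y ∈ W.chainI r t :=
          mem_chainI_of_eq W t x hxt y hy
            (fun b hb => heqs b (List.mem_cons_of_mem c hb) (hat b hb))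
        exact hne (hanti _ _ hr (hxm y hyt))
      · exact (IH ht).mp hxt
          ⟨y, hy, c, hct, fun b hb hcb => heqs b (List.mem_cons_of_mem a hb) hcb, hr, hne⟩
    · intro hnd
      have hxt : x ∈ W.chainI r t := by
        refine (IH ht).mpr ?_
        rintro ⟨y, hy, c, hct, heq, hr, hne⟩
        refine hnd ⟨y, hy, c, List.mem_cons_of_mem a hct, ?_, hr, hne⟩
        intro b hb hcb
        rcases List.mem_cons.mp hb with rfl | hbt
        · exact absurd (hcb.trans (hat c hct)) (lt_irrefl c)
        · exact heq b hbt hcb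
      refine ⟨hxt, ?_⟩
      intro y hyt
      by_contra hnr
      have hr : r (W.levelCostI a x) (W.levelCostI a y) :=
        (htot (W.levelCostI a y) (W.levelCostI a x)).resolve_left hnr
      have hne : W.levelCostI a x ≠ W.levelCostI a y := by
        intro he
        exact hnr (he ▸ (htot (W.levelCostI a x) (W.levelCostI a x)).elim id id)
      refine hnd ⟨y, chainI_subset W t hyt, a, List.mem_cons_self, ?_, hr, hne⟩
      intro b hb hab
      rcases List.mem_cons.mp hb with rfl | hbt
      · exact absurd hab (lt_irrefl b)
      · exact chainI_eq_on W hanti t x hxt y hyt b hbt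

/-- Every cons-tail inside `s` is the list of levels above the head. -/
def TailsAbove (W : EWSystem ι ε) (s : List ℕ+) : Prop :=
  ∀ u (a : ℕ+) t, s = u ++ a :: t → t = W.levelsAbove a

lemma tailsAbove_sort : W.TailsAbove (W.levels.sort (· ≤ ·)) := by
  intro u a t h
  have hsort : List.Pairwise (· < ·) (u ++ a :: t) := h ▸ (Finset.sortedLT_sort W.levels).pairwise
  have hnd : (u ++ a :: t).Nodup := h ▸ Finset.sort_nodup W.levels _
  obtain ⟨hu, hat, huat⟩ := List.pairwise_append.mp hsort
  have htlt : List.Pairwise (· < ·) t := hat.of_cons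
  have hta : ∀ b ∈ t, a < b := fun b hb => List.rel_of_pairwise_cons hat hb
  have hmem : ∀ b : ℕ+, b ∈ t ↔ b ∈ W.levels ∧ a < b := by
    intro b
    constructor
    · intro hb
      refine ⟨?_, hta b hb⟩
      have : b ∈ u ++ a :: t := List.mem_append_right u (List.mem_cons_of_mem a hb)
      rw [← h] at this
      exact (Finset.mem_sort _).mp this
    · rintro ⟨hbL, hab⟩
      have : b ∈ u ++ a :: t := by
        rw [← h]; exact (Finset.mem_sort _).mpr hbL
      rcases List.mem_append.mp this with hbu | hbc
      · exact absurd (huat b hbu a (List.mem_cons_self)) (lt_asymm hab)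
      · rcases List.mem_cons.mp hbc with rfl | hbt
        · exact absurd hab (lt_irrefl b)
        · exact hbt
  have hmem' : ∀ b : ℕ+, b ∈ W.levelsAbove a ↔ b ∈ W.levels ∧ a < b := by
    intro b
    rw [EWSystem.levelsAbove, Finset.mem_sort, Finset.mem_filter]
  have hndt : t.Nodup := by
    have : List.Sublist t (u ++ a :: t) :=
      (List.sublist_cons_self a t).trans (List.sublist_append_right u (a :: t))
    exact this.nodup hnd
  have hperm : List.Perm t (W.levelsAbove a) := by
    refine (List.perm_ext_iff_of_nodup hndt ?_).mpr ?_
    · exact Finset.sort_nodup _ _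
    · intro b; rw [hmem b, hmem' b]
  exact List.Perm.eq_of_pairwise' (htlt.imp (fun h => le_of_lt h))
    (Finset.pairwise_sort _ _) hperm

lemma tailsAbove_cons {a : ℕ+} {t : List ℕ+} (h : W.TailsAbove (a :: t)) :
    t = W.levelsAbove a ∧ W.TailsAbove t := by
  refine ⟨h [] a t rfl, ?_⟩
  intro u c s hs
  exact h (a :: u) c s (by rw [hs]; rfl)

lemma mem_chainI_iff_lopt : ∀ s : List ℕ+, W.TailsAbove s → ∀ x : ι,
    (x ∈ W.chainI r s ↔ W.IsModel x ∧ ∀ a ∈ s, W.LOptI r a x)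
  | [] => by intro _ x; simp [EWSystem.chainI]
  | a :: t => by
    intro hTA x
    obtain ⟨hta, hTAt⟩ := tailsAbove_cons W hTA
    constructor
    · rintro hmem
      obtain ⟨hM, hall⟩ := (mem_chainI_iff_lopt t hTAt x).mp hmem.1
      refine ⟨hM, ?_⟩
      intro b hb
      rcases List.mem_cons.mp hb with rfl | hbt
      · show x ∈ argOn r (W.levelCostI b) (W.chainI r (W.levelsAbove b))
        rw [← hta]; exact hmem
      · exact hall b hbt
    · rintro ⟨hM, hall⟩
      have := hall a (List.mem_cons_self)
      rw [EWSystem.LOptI, ← hta] at this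
      exact this

end Rel

lemma levelCostI_eq_zero {W : EWSystem ι ε} {l : ℕ+} (h : l ∉ W.levels) (I : ι) :
    W.levelCostI l I = 0 := by
  apply Multiset.sum_eq_zero
  intro z hz
  obtain ⟨B, hB, rfl⟩ := Multiset.mem_map.mp hz
  rw [if_neg]
  intro he
  exact h (Multiset.mem_toFinset.mpr (Multiset.mem_map.mpr ⟨B, hB, he⟩))

lemma key {W : EWSystem ι ε} {r : ℝ → ℝ → Prop}
    (htot : ∀ a b : ℝ, r a b ∨ r b a) (hanti : ∀ a b : ℝ, r a b → r b a → a = b)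
    {Istar : ι} (hIstar : W.IsModel Istar) :
    W.OptimalI r Istar ↔ ¬ ∃ I', W.IsModel I' ∧ ∃ l ∈ W.levels,
      (∀ l' : ℕ+, l < l' → W.levelCostI l' Istar = W.levelCostI l' I') ∧
      r (W.levelCostI l Istar) (W.levelCostI l I') ∧
      W.levelCostI l Istar ≠ W.levelCostI l I' := by
  set fs := W.levels.sort (· ≤ ·) with hfs
  have hms : ∀ b : ℕ+, b ∈ fs ↔ b ∈ W.levels := fun b => Finset.mem_sort _
  have h1 : W.OptimalI r Istar ↔ Istar ∈ W.chainI r fs := by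
    rw [mem_chainI_iff_lopt W fs (tailsAbove_sort W) Istar, EWSystem.OptimalI]
    constructor
    · rintro ⟨hM, h⟩; exact ⟨hM, fun a ha => h a ((hms a).mp ha)⟩
    · rintro ⟨hM, h⟩; exact ⟨hM, fun a ha => h a ((hms a).mpr ha)⟩
  rw [h1, mem_chainI_iff W htot hanti hIstar ((Finset.sortedLT_sort W.levels).pairwise)]
  apply not_congr
  apply exists_congr; intro y
  apply and_congr_right; intro hy
  constructor
  · rintro ⟨a, ha, heq, hstr⟩
    refine ⟨a, (hms a).mp ha, ?_, hstr⟩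
    intro l' hl'
    by_cases hmem : l' ∈ W.levels
    · exact heq l' ((hms l').mpr hmem) hl'
    · rw [levelCostI_eq_zero hmem, levelCostI_eq_zero hmem]
  · rintro ⟨a, ha, heq, hstr⟩
    exact ⟨a, (hms a).mpr ha, fun b _ hb => heq b hb, hstr⟩

end EWSystem


/-- `I'` max-dominates `I`: for some level `l ∈ levels(W)`, the level sums agree
at every level greater than `l` and the level-`l` sum of `I'` is strictly greater. -/
def MaxDominatesI (W : EWSystem ι ε) (I' I : ι) : Prop :=
  ∃ l ∈ W.levels,
    (∀ l' : ℕ+, l < l' → W.levelCostI l' I = W.levelCostI l' I') ∧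
    W.levelCostI l I < W.levelCostI l I'

/-- `I'` min-dominates `I`. -/
def MinDominatesI (W : EWSystem ι ε) (I' I : ι) : Prop :=
  ∃ l ∈ W.levels,
    (∀ l' : ℕ+, l < l' → W.levelCostI l' I = W.levelCostI l' I') ∧
    W.levelCostI l I' < W.levelCostI l I

/-- a model `I*` of `W` is optimal iff no model of `W` max-dominates it,
and min-optimal iff no model of `W` min-dominates it. -/
theorem stmt0 (W : EWSystem ι ε) (Istar : ι) (hIstar : W.IsModel Istar) :
    (W.OptimalI EWSystem.maxR Istar ↔
      ¬ ∃ I' : ι, W.IsModel I' ∧ MaxDominatesI W I' Istar) ∧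
    (W.OptimalI EWSystem.minR Istar ↔
      ¬ ∃ I' : ι, W.IsModel I' ∧ MinDominatesI W I' Istar) := by
  constructor
  · rw [EWSystem.key (r := EWSystem.maxR) (fun a b => le_total a b)
      (fun a b h1 h2 => le_antisymm h1 h2) hIstar]
    apply not_congr
    apply exists_congr; intro I'
    apply and_congr_right; intro _
    unfold MaxDominatesI
    apply exists_congr; intro l
    apply and_congr_right; intro _
    apply and_congr_right; intro _
    exact lt_iff_le_and_ne.symm
  · rw [EWSystem.key (r := EWSystem.minR) (fun a b => le_total b a)
      (fun a b h1 h2 => le_antisymm h2 h1) hIstar]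
    apply not_congr
    apply exists_congr; intro I'
    apply and_congr_right; intro _
    unfold MinDominatesI
    apply exists_congr; intro l
    apply and_congr_right; intro _
    apply and_congr_right; intro _
    constructor
    · rintro ⟨h, hne⟩
      exact lt_of_le_of_ne h hne.symm
    · intro h
      exact ⟨h.le, h.ne'⟩
end

section
/- Let W = (H, Z) be an ew-system. An extended model (I*,ν*) of W is an optimal extended model (with respect to the recursive argmax definition) if and only if no extended model of W max-dominates (I*,ν*); and (I*,ν*) is a min-optimal extended model (with respect to the recursive argmin definition) if and only if no extended model of W min-dominates (I*,ν*). -/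
open scoped Classical

variable {ι ε : Type*}

/-- `(I',ν')` max-dominates `(I,ν)`: for some level `l ∈ levels(W)`, the extended level
sums agree at every level greater than `l` and the level-`l` sum of `(I',ν')` is
strictly greater. -/
def MaxDominatesE (W : EWSystem ι ε) (p' p : ι × ε) : Prop :=
  ∃ l ∈ W.levels,
    (∀ l' : ℕ+, l < l' → W.levelCostE l' p = W.levelCostE l' p') ∧
    W.levelCostE l p < W.levelCostE l p'

/-- `(I',ν')` min-dominates `(I,ν)`. -/
def MinDominatesE (W : EWSystem ι ε) (p' p : ι × ε) : Prop :=
  ∃ l ∈ W.levels,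
    (∀ l' : ℕ+, l < l' → W.levelCostE l' p = W.levelCostE l' p') ∧
    W.levelCostE l p' < W.levelCostE l p

namespace EWAux

open EWSystem

variable (W : EWSystem ι ε) (r : ℝ → ℝ → Prop)

lemma chainE_subset : ∀ L, W.chainE r L ⊆ W.H
  | [] => fun _ h => h
  | a :: rest => fun p hp => chainE_subset rest hp.1

lemma mem_levelsAbove {l l' : ℕ+} :
    l' ∈ W.levelsAbove l ↔ l' ∈ W.levels ∧ l < l' := by
  simp [EWSystem.levelsAbove, Finset.mem_sort, Finset.mem_filter]

lemma levelCostE_eq_zero {l : ℕ+} (h : l ∉ W.levels) (p : ι × ε) :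
    W.levelCostE l p = 0 := by
  rw [EWSystem.levelCostE]
  apply Multiset.sum_eq_zero
  intro x hx
  obtain ⟨B, hB, rfl⟩ := Multiset.mem_map.1 hx
  rw [if_neg]
  intro hBl
  exact h (by simp [EWSystem.levels, Multiset.mem_toFinset]; exact ⟨B, hB, hBl⟩)

lemma eq_on_chainE (hanti : ∀ a b : ℝ, r a b → r b a → a = b) :
    ∀ L, ∀ a ∈ L, ∀ p q : ι × ε, p ∈ W.chainE r L → q ∈ W.chainE r L →
      W.levelCostE a p = W.levelCostE a q
  | [], a, ha => by simp at ha
  | b :: rest, a, ha => by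
    intro p q hp hq
    rcases List.mem_cons.1 ha with rfl | ha
    · exact hanti _ _ (hq.2 p hp.1) (hp.2 q hq.1)
    · exact eq_on_chainE hanti rest a ha p q hp.1 hq.1

lemma mem_chainE_of_eq :
    ∀ L, ∀ p q : ι × ε, p ∈ W.chainE r L → q ∈ W.H →
      (∀ a ∈ L, W.levelCostE a p = W.levelCostE a q) → q ∈ W.chainE r L
  | [] => fun _ q _ hq _ => hq
  | b :: rest => fun p q hp hq heq => by
    refine ⟨mem_chainE_of_eq rest p q hp.1 hq fun a ha => heq a (List.mem_cons_of_mem _ ha), ?_⟩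
    intro y hy
    rw [← heq b (List.mem_cons_self (a := b) (l := rest))]
    exact hp.2 y hy

lemma levelsAbove_cons {l a : ℕ+} (h : a ∈ W.levels) (hla : l < a)
    (hmin : ∀ b ∈ W.levels, l < b → a ≤ b) :
    W.levelsAbove l = a :: W.levelsAbove a := by
  unfold EWSystem.levelsAbove
  have hset : W.levels.filter (fun l' => l < l') =
      insert a (W.levels.filter (fun l' => a < l')) := by
    ext b
    simp only [Finset.mem_filter, Finset.mem_insert]
    constructor
    · rintro ⟨hb, hlb⟩
      rcases eq_or_lt_of_le (hmin b hb hlb) with h' | h'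
      · exact Or.inl h'.symm
      · exact Or.inr ⟨hb, h'⟩
    · rintro (rfl | ⟨hb, hab⟩)
      · exact ⟨h, hla⟩
      · exact ⟨hb, lt_trans hla hab⟩
  rw [hset, Finset.sort_insert]
  · intro b hb
    exact le_of_lt (Finset.mem_filter.1 hb).2
  · intro hmem
    exact absurd (Finset.mem_filter.1 hmem).2 (lt_irrefl a)

/-- Generic no-dominator predicate. -/
def NoDom (p : ι × ε) : Prop :=
  ¬ ∃ p' : ι × ε, p' ∈ W.H ∧ ∃ l ∈ W.levels,
    (∀ l' : ℕ+, l < l' → W.levelCostE l' p = W.levelCostE l' p') ∧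
    ¬ r (W.levelCostE l p') (W.levelCostE l p)

lemma mem_chain_of_nodom (htot : ∀ a b : ℝ, r a b ∨ r b a)
    (hanti : ∀ a b : ℝ, r a b → r b a → a = b)
    {pstar : ι × ε} (hp : pstar ∈ W.H) (hnd : NoDom W r pstar) :
    ∀ n l, (W.levels.filter (fun l' => l < l')).card ≤ n →
      pstar ∈ W.chainE r (W.levelsAbove l) := by
  intro n
  induction n with
  | zero =>
    intro l hcard
    have : W.levels.filter (fun l' => l < l') = ∅ := Finset.card_eq_zero.1 (Nat.le_zero.1 hcard)
    have : W.levelsAbove l = [] := by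
      unfold EWSystem.levelsAbove; rw [this]; exact Finset.sort_empty _
    rw [this]; exact hp
  | succ n ih =>
    intro l hcard
    by_cases hne : (W.levels.filter (fun l' => l < l')).Nonempty
    · set a := (W.levels.filter (fun l' => l < l')).min' hne with ha
      have hamem := (W.levels.filter (fun l' => l < l')).min'_mem hne
      rw [Finset.mem_filter] at hamem
      have hmin : ∀ b ∈ W.levels, l < b → a ≤ b := fun b hb hlb =>
        Finset.min'_le _ b (Finset.mem_filter.2 ⟨hb, hlb⟩)
      have hcons := levelsAbove_cons W hamem.1 hamem.2 hmin
      have hsub : W.levels.filter (fun l' => a < l') ⊂ W.levels.filter (fun l' => l < l') := by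
        refine Finset.ssubset_iff_of_subset ?_ |>.2 ?_
        · intro b hb
          rw [Finset.mem_filter] at hb ⊢
          exact ⟨hb.1, lt_trans hamem.2 hb.2⟩
        · exact ⟨a, Finset.mem_filter.2 ⟨hamem.1, hamem.2⟩, by simp⟩
      have hcard' : (W.levels.filter (fun l' => a < l')).card ≤ n :=
        Nat.lt_succ_iff.1 (lt_of_lt_of_le (Finset.card_lt_card hsub) hcard)
      have hchain := ih a hcard'
      rw [hcons]
      refine ⟨hchain, ?_⟩
      intro y hy
      by_contra hry
      apply hnd
      refine ⟨y, chainE_subset W r _ hy, a, hamem.1, ?_, hry⟩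
      intro l' hl'
      by_cases hl'mem : l' ∈ W.levels
      · exact eq_on_chainE W r hanti _ l' ((mem_levelsAbove W).2 ⟨hl'mem, hl'⟩) _ _ hchain hy
      · rw [levelCostE_eq_zero W hl'mem, levelCostE_eq_zero W hl'mem]
    · have : W.levels.filter (fun l' => l < l') = ∅ := Finset.not_nonempty_iff_eq_empty.1 hne
      have : W.levelsAbove l = [] := by
        unfold EWSystem.levelsAbove; rw [this]; exact Finset.sort_empty _
      rw [this]; exact hp

lemma optimal_iff_nodom (htot : ∀ a b : ℝ, r a b ∨ r b a)
    (hanti : ∀ a b : ℝ, r a b → r b a → a = b)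
    {pstar : ι × ε} (hp : pstar ∈ W.H) :
    W.OptimalE r pstar ↔ NoDom W r pstar := by
  constructor
  · rintro ⟨_, hopt⟩ ⟨p', hp', l, hl, heq, hstrict⟩
    have hlopt := hopt l hl
    have hp'chain : p' ∈ W.chainE r (W.levelsAbove l) := by
      refine mem_chainE_of_eq W r _ pstar p' hlopt.1 hp' ?_
      intro a ha
      exact heq a ((mem_levelsAbove W).1 ha).2
    exact hstrict (hlopt.2 p' hp'chain)
  · intro hnd
    refine ⟨hp, fun l hl => ?_⟩
    refine ⟨mem_chain_of_nodom W r htot hanti hp hnd _ l le_rfl, ?_⟩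
    intro y hy
    by_contra hry
    apply hnd
    refine ⟨y, chainE_subset W r _ hy, l, hl, ?_, hry⟩
    intro l' hl'
    by_cases hl'mem : l' ∈ W.levels
    · exact eq_on_chainE W r hanti _ l' ((mem_levelsAbove W).2 ⟨hl'mem, hl'⟩) _ _
        (mem_chain_of_nodom W r htot hanti hp hnd _ l le_rfl) hy
    · rw [levelCostE_eq_zero W hl'mem, levelCostE_eq_zero W hl'mem]

end EWAux

/-- an extended model `(I*,ν*)` of `W` is an optimal extended model iff
no extended model of `W` max-dominates it, and min-optimal iff none min-dominates it. -/
theorem stmt1 (W : EWSystem ι ε) (pstar : ι × ε) (hpstar : pstar ∈ W.H) :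
    (W.OptimalE EWSystem.maxR pstar ↔
      ¬ ∃ p' : ι × ε, p' ∈ W.H ∧ MaxDominatesE W p' pstar) ∧
    (W.OptimalE EWSystem.minR pstar ↔
      ¬ ∃ p' : ι × ε, p' ∈ W.H ∧ MinDominatesE W p' pstar) := by
  constructor
  · rw [EWAux.optimal_iff_nodom W EWSystem.maxR (fun a b => le_total a b)
      (fun a b h1 h2 => le_antisymm h1 h2) hpstar]
    unfold EWAux.NoDom MaxDominatesE EWSystem.maxR
    simp only [not_le]
  · rw [EWAux.optimal_iff_nodom W EWSystem.minR (fun a b => le_total b a)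
      (fun a b h1 h2 => le_antisymm h2 h1) hpstar]
    unfold EWAux.NoDom MinDominatesE EWSystem.minR
    simp only [not_le]
end

section
/- Let S be a finite family of pairs (Mod_F, w_F), where each Mod_F ⊆ ι × ε and each w_F is a positive integer; write I ⊨ F when (I,ν) ∈ Mod_F for some ν ∈ ε. Let W be the ew-system whose hard theory has extended-model set ι × ε (every extended interpretation is an extended model) and whose ew-conditions are exactly the conditions (Mod_F, w_F, zero cost function, level 1) for (Mod_F, w_F) ∈ S. Then an interpretation I* ∈ ι is an optimal model of W if and only if I* is a solution of the weighted MaxSMT problem S, i.e., Σ_{(F,w_F) ∈ S} w_F·[I* ⊨ F] ≥ Σ_{(F,w_F) ∈ S} w_F·[I ⊨ F] for every interpretation I ∈ ι (where [I ⊨ F] is 1 if I ⊨ F and 0 otherwise). -/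
open scoped Classical

/-- `I*` is an optimal model of the ew-system whose hard theory has all of
`ι × ε` as extended models and whose ew-conditions are `(Mod_F, w_F, 0, 1)` for
`(Mod_F, w_F) ∈ S`, iff `I*` is a solution of the weighted MaxSMT problem `S`. -/
theorem stmt2 {ι ε : Type*} [Nonempty ε] (S : Finset (Set (ι × ε) × ℤ))
    (hpos : ∀ p ∈ S, 0 < p.2) (Istar : ι) :
    EWSystem.OptimalI
      (⟨Set.univ, S.val.map (fun p => ⟨p.1, p.2, fun _ => (0 : ℝ), 1⟩)⟩ : EWSystem ι ε)
      EWSystem.maxR Istar ↔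
    ∀ I : ι,
      (∑ p ∈ S, (p.2 : ℝ) * (if ∃ ν, (I, ν) ∈ p.1 then 1 else 0)) ≤
      (∑ p ∈ S, (p.2 : ℝ) * (if ∃ ν, (Istar, ν) ∈ p.1 then 1 else 0)) := by
  classical
  set W : EWSystem ι ε :=
    ⟨Set.univ, S.val.map (fun p => ⟨p.1, p.2, fun _ => (0 : ℝ), 1⟩)⟩ with hW
  obtain ⟨ν0⟩ := ‹Nonempty ε›
  have hmodel : ∀ I : ι, W.IsModel I := fun I => ⟨ν0, trivial⟩
  have hcost : ∀ I : ι, W.levelCostI 1 I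
      = ∑ p ∈ S, (p.2 : ℝ) * (if ∃ ν, (I, ν) ∈ p.1 then 1 else 0) := by
    intro I
    rw [hW]
    simp only [EWSystem.levelCostI, Multiset.map_map, Finset.sum]
    congr 1
    apply Multiset.map_congr rfl
    intro p _
    simp [EWCond.costI, EWCond.IsModel, mul_ite, mul_one, mul_zero]
    exact if_congr Iff.rfl rfl rfl
  rcases S.eq_empty_or_nonempty with h | h
  · subst h
    constructor
    · intro _ I; simp
    · intro _
      refine ⟨hmodel _, fun l hl => ?_⟩
      simp [EWSystem.levels, hW] at hl
  · have hlev : W.levels = {1} := by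
      ext l
      simp only [EWSystem.levels, hW, Multiset.map_map, Function.comp,
        Multiset.mem_toFinset, Multiset.mem_map, Finset.mem_singleton]
      constructor
      · rintro ⟨p, -, rfl⟩; rfl
      · rintro rfl; exact ⟨_, h.choose_spec, rfl⟩
    have habove : W.levelsAbove 1 = [] := by
      have : W.levels.filter (fun l' => 1 < l') = ∅ := by
        rw [hlev]; decide
      simp [EWSystem.levelsAbove, this]
    constructor
    · rintro ⟨-, hopt⟩ I
      have h1 := hopt 1 (by simp [hlev])
      rw [EWSystem.LOptI, habove] at h1
      have h2 := h1.2 I (hmodel I)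
      rw [← hcost, ← hcost]
      exact h2
    · intro hI
      refine ⟨hmodel _, fun l hl => ?_⟩
      have : l = 1 := by simpa [hlev] using hl
      subst this
      rw [EWSystem.LOptI, habove]
      exact ⟨hmodel _, fun y _ => by rw [EWSystem.maxR, hcost, hcost]; exact hI y⟩
end

section
/- Let W = (H, Z) be an ew-system and let S ⊆ Z be a set of ew-conditions all sharing the same level l. Suppose that for any two models I and I' of W that are succ(l)-optimal (resp. succ(l)-min-optimal) — or for any two models of W, in case succ(l) is undefined, i.e., l is the greatest level of W — the equality Σ_{B ∈ S} ⟦I⊨B⟧ = Σ_{B ∈ S} ⟦I'⊨B⟧ holds. Then W and the ew-system (H, Z \ S) have the same optimal (resp. min-optimal) models. -/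
open scoped Classical

section helperlemmas

lemma sort_eq_of (F : Finset ℕ+) (L : List ℕ+) (h1 : L.Pairwise (· ≤ ·)) (h2 : L.Nodup)
    (h3 : ∀ x, x ∈ L ↔ x ∈ F) : F.sort (· ≤ ·) = L := by
  apply List.Perm.eq_of_pairwise' (F.pairwise_sort _) h1
  apply List.perm_of_nodup_nodup_toFinset_eq (F.sort_nodup _) h2
  ext x
  simp [h3]

lemma mem_sort_filter {F : Finset ℕ+} {p : ℕ+ → Prop} [DecidablePred p] {x : ℕ+}
    (h : x ∈ (F.filter p).sort (· ≤ ·)) : x ∈ F ∧ p x := by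
  have := (Finset.mem_sort _).mp h
  simpa using Finset.mem_filter.mp this

lemma sort_split (F : Finset ℕ+) (l : ℕ+) (hl : l ∈ F) :
    F.sort (· ≤ ·) =
      (F.filter (· < l)).sort (· ≤ ·) ++ l :: (F.filter (fun x => l < x)).sort (· ≤ ·) := by
  apply sort_eq_of
  · show List.Pairwise _ _
    rw [List.pairwise_append, List.pairwise_cons]
    refine ⟨Finset.pairwise_sort _ _, ⟨fun x hx => (mem_sort_filter hx).2.le,
      Finset.pairwise_sort _ _⟩, ?_⟩
    intro x hx y hy
    have hx' := (mem_sort_filter hx).2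
    rcases List.mem_cons.mp hy with rfl | hy
    · exact hx'.le
    · exact (hx'.trans (mem_sort_filter hy).2).le
  · show List.Pairwise _ _
    rw [List.pairwise_append, List.pairwise_cons]
    refine ⟨Finset.sort_nodup _ _,
      ⟨fun x hx h => absurd ((h ▸ (mem_sort_filter hx).2) : l < l) (lt_irrefl l),
      Finset.sort_nodup _ _⟩, ?_⟩
    intro x hx y hy
    have hx' := (mem_sort_filter hx).2
    rcases List.mem_cons.mp hy with rfl | hy
    · exact hx'.ne
    · exact (hx'.trans (mem_sort_filter hy).2).ne
  · intro x
    simp only [List.mem_append, List.mem_cons, Finset.mem_sort, Finset.mem_filter]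
    constructor
    · rintro (⟨h, _⟩ | rfl | ⟨h, _⟩) <;> first | exact h | exact hl
    · intro h
      rcases lt_trichotomy x l with h' | rfl | h'
      · exact Or.inl ⟨h, h'⟩
      · exact Or.inr (Or.inl rfl)
      · exact Or.inr (Or.inr ⟨h, h'⟩)

lemma sort_split_no (F : Finset ℕ+) (l : ℕ+) (hl : l ∉ F) :
    F.sort (· ≤ ·) =
      (F.filter (· < l)).sort (· ≤ ·) ++ (F.filter (fun x => l < x)).sort (· ≤ ·) := by
  apply sort_eq_of
  · show List.Pairwise _ _
    rw [List.pairwise_append]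
    exact ⟨Finset.pairwise_sort _ _, Finset.pairwise_sort _ _,
      fun x hx y hy => ((mem_sort_filter hx).2.trans (mem_sort_filter hy).2).le⟩
  · show List.Pairwise _ _
    rw [List.pairwise_append]
    exact ⟨Finset.sort_nodup _ _, Finset.sort_nodup _ _,
      fun x hx y hy => ((mem_sort_filter hx).2.trans (mem_sort_filter hy).2).ne⟩
  · intro x
    simp only [List.mem_append, Finset.mem_sort, Finset.mem_filter]
    constructor
    · rintro (⟨h, _⟩ | ⟨h, _⟩) <;> exact h
    · intro h
      rcases lt_trichotomy x l with h' | rfl | h'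
      · exact Or.inl ⟨h, h'⟩
      · exact absurd h hl
      · exact Or.inr ⟨h, h'⟩

end helperlemmas

/-- if `S ⊆ Z` consists of ew-conditions all of level `l`, and any two
`succ(l)`-optimal (resp. `succ(l)`-min-optimal) models of `W` — or any two models of
`W` when `succ(l)` is undefined, i.e. `l` is the greatest level — have equal sums
`Σ_{B ∈ S} ⟦I ⊨ B⟧`, then `W` and `(H, Z \ S)` have the same optimal
(resp. min-optimal) models. -/
theorem stmt11 {ι ε : Type*} (W : EWSystem ι ε) (S : Multiset (EWCond ι ε))
    (hS : S ≤ W.Z) (l : ℕ+) (hl : ∀ B ∈ S, B.lvl = l)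
    (r : ℝ → ℝ → Prop) (hr : r = EWSystem.maxR ∨ r = EWSystem.minR)
    (heq : ∀ I I' : ι,
      (if h : (W.levels.filter (fun l' => l < l')).Nonempty then
        W.LOptI r ((W.levels.filter (fun l' => l < l')).min' h) I ∧
        W.LOptI r ((W.levels.filter (fun l' => l < l')).min' h) I'
      else W.IsModel I ∧ W.IsModel I') →
      (S.map (fun B => B.costI I)).sum = (S.map (fun B => B.costI I')).sum) :
    ∀ I : ι, W.OptimalI r I ↔ (EWSystem.mk W.H (W.Z - S)).OptimalI r I := by
  classical
  by_cases hS0 : S = 0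
  · subst hS0
    intro I
    simp only [tsub_zero]
  set W' : EWSystem ι ε := EWSystem.mk W.H (W.Z - S) with hW'def
  obtain ⟨B0, hB0⟩ := Multiset.exists_mem_of_ne_zero hS0
  have hZ : W.Z = W'.Z + S := by
    show W.Z = W.Z - S + S
    rw [tsub_add_cancel_of_le hS]
  have hlW : l ∈ W.levels := by
    simp only [EWSystem.levels, Multiset.mem_toFinset, Multiset.mem_map]
    exact ⟨B0, Multiset.mem_of_le hS hB0, hl B0 hB0⟩
  have hlev : W.levels = W'.levels ∪ {l} := by
    rw [EWSystem.levels, EWSystem.levels, hZ, Multiset.map_add, Multiset.toFinset_add]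
    congr 1
    ext x
    simp only [Multiset.mem_toFinset, Multiset.mem_map, Finset.mem_singleton]
    constructor
    · rintro ⟨B, hB, rfl⟩; exact hl B hB
    · rintro rfl; exact ⟨B0, hB0, hl B0 hB0⟩
  have memlev : ∀ x : ℕ+, x ≠ l → (x ∈ W.levels ↔ x ∈ W'.levels) := by
    intro x hx
    rw [hlev]
    simp [hx]
  -- level cost relations
  set σ : ι → ℝ := fun J => (S.map (fun B => B.costI J)).sum with hσdef
  have hlc_ne : ∀ l' : ℕ+, l' ≠ l → W.levelCostI l' = W'.levelCostI l' := by
    intro l' hl'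
    funext J
    rw [EWSystem.levelCostI, EWSystem.levelCostI, hZ, Multiset.map_add, Multiset.sum_add]
    rw [show ((S.map fun B => if B.lvl = l' then B.costI J else 0)).sum = 0 from
      Multiset.sum_eq_zero (by
        intro x hx
        obtain ⟨B, hB, rfl⟩ := Multiset.mem_map.mp hx
        rw [if_neg (by rw [hl B hB]; exact fun h => hl' h.symm)]), add_zero]
  have hlc_l : ∀ J, W.levelCostI l J = W'.levelCostI l J + σ J := by
    intro J
    rw [EWSystem.levelCostI, EWSystem.levelCostI, hZ, Multiset.map_add, Multiset.sum_add]
    congr 1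
    apply congrArg
    apply Multiset.map_congr rfl
    intro B hB
    rw [if_pos (hl B hB)]
  -- chains
  have chainGen : ∀ (A ls1 ls2 : List ℕ+), l ∉ A → W.chainI r ls1 = W'.chainI r ls2 →
      W.chainI r (A ++ ls1) = W'.chainI r (A ++ ls2) := by
    intro A
    induction A with
    | nil => intro ls1 ls2 _ h; simpa using h
    | cons a A ih =>
      intro ls1 ls2 hA h
      show EWSystem.argOn r (W.levelCostI a) (W.chainI r (A ++ ls1)) =
        EWSystem.argOn r (W'.levelCostI a) (W'.chainI r (A ++ ls2))
      rw [ih ls1 ls2 (fun hm => hA (List.mem_cons_of_mem a hm)) h,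
        hlc_ne a (fun he => hA (he ▸ List.mem_cons_self))]
  have hbase : W.chainI r [] = W'.chainI r [] := rfl
  have hchain_nol : ∀ ls : List ℕ+, l ∉ ls → W.chainI r ls = W'.chainI r ls := by
    intro ls h
    have := chainGen ls [] [] h hbase
    simpa using this
  set F : Finset ℕ+ := W.levels.filter (fun l' => l < l') with hFdef
  set T : List ℕ+ := W.levelsAbove l with hTdef
  have hTF : T = F.sort (· ≤ ·) := rfl
  have hlT : l ∉ T := by
    intro h
    rw [hTF] at h
    exact lt_irrefl l (mem_sort_filter h).2
  set C : Set ι := W.chainI r T with hCdef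
  have hCT : W'.chainI r T = C := (hchain_nol T hlT).symm
  have hfilgt : ∀ m : ℕ+, l < m → F.filter (fun x => m < x) = W.levels.filter (fun x => m < x) := by
    intro m hm
    ext x
    simp only [hFdef, Finset.mem_filter, Finset.filter_filter]
    exact ⟨fun ⟨a, b⟩ => ⟨a, b.2⟩, fun ⟨a, b⟩ => ⟨a, hm.trans b, b⟩⟩
  have hTsucc : ∀ h : F.Nonempty, T = F.min' h :: W.levelsAbove (F.min' h) := by
    intro h
    rw [hTF, sort_split F (F.min' h) (F.min'_mem h)]
    have h1 : F.filter (· < F.min' h) = ∅ := by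
      apply Finset.filter_eq_empty_iff.mpr
      intro x hx
      exact not_lt.mpr (F.min'_le x hx)
    have hml : l < F.min' h := (Finset.mem_filter.mp (F.min'_mem h)).2
    rw [h1, hfilgt _ hml]
    simp [EWSystem.levelsAbove]
  have hTemp : ¬ F.Nonempty → T = [] := by
    intro h
    rw [hTF, Finset.not_nonempty_iff_eq_empty.mp h]
    simp
  have hCopt : ∀ J : ι, J ∈ C ↔
      (if h : F.Nonempty then W.LOptI r (F.min' h) J else W.IsModel J) := by
    intro J
    by_cases h : F.Nonempty
    · rw [dif_pos h, hCdef, hTsucc h]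
      exact Iff.rfl
    · rw [dif_neg h, hCdef, hTemp h]
      exact Iff.rfl
  have hσC : ∀ J ∈ C, ∀ J' ∈ C, σ J = σ J' := by
    intro J hJ J' hJ'
    apply heq J J'
    have hJ1 := (hCopt J).mp hJ
    have hJ'1 := (hCopt J').mp hJ'
    by_cases h : F.Nonempty
    · rw [dif_pos h] at hJ1 hJ'1 ⊢
      exact ⟨hJ1, hJ'1⟩
    · rw [dif_neg h] at hJ1 hJ'1 ⊢
      exact ⟨hJ1, hJ'1⟩
  have rmono : ∀ a b c : ℝ, r (a + c) (b + c) ↔ r a b := by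
    rcases hr with rfl | rfl <;> intro a b c <;> simp [EWSystem.maxR, EWSystem.minR]
  have rrefl : ∀ a : ℝ, r a a := by
    rcases hr with rfl | rfl <;> intro a <;> simp [EWSystem.maxR, EWSystem.minR]
  have hargl : EWSystem.argOn r (W.levelCostI l) C = EWSystem.argOn r (W'.levelCostI l) C := by
    ext J
    simp only [EWSystem.argOn, Set.mem_setOf_eq]
    constructor
    · rintro ⟨hJ, hopt⟩
      refine ⟨hJ, fun y hy => ?_⟩
      have := hopt y hy
      rw [hlc_l, hlc_l, hσC y hy J hJ] at this
      exact (rmono _ _ _).mp this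
    · rintro ⟨hJ, hopt⟩
      refine ⟨hJ, fun y hy => ?_⟩
      rw [hlc_l, hlc_l, hσC y hy J hJ]
      exact (rmono _ _ _).mpr (hopt y hy)
  -- when no level-l condition remains
  have hlc0 : l ∉ W'.levels → ∀ J, W'.levelCostI l J = 0 := by
    intro h J
    apply Multiset.sum_eq_zero
    intro x hx
    obtain ⟨B, hB, rfl⟩ := Multiset.mem_map.mp hx
    rw [if_neg]
    intro hBl
    exact h (by
      simp only [EWSystem.levels, Multiset.mem_toFinset, Multiset.mem_map]
      exact ⟨B, hB, hBl⟩)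
  have hargC : l ∉ W'.levels → EWSystem.argOn r (W.levelCostI l) C = C := by
    intro h
    ext J
    simp only [EWSystem.argOn, Set.mem_setOf_eq]
    constructor
    · rintro ⟨hJ, _⟩; exact hJ
    · intro hJ
      refine ⟨hJ, fun y hy => ?_⟩
      rw [hlc_l, hlc_l, hlc0 h, hlc0 h, hσC y hy J hJ]
      exact rrefl _
  have hchain_lT : W.chainI r (l :: T) = EWSystem.argOn r (W.levelCostI l) C := rfl
  -- chainB : chains over levelsAbove agree
  have hla : ∀ l' : ℕ+, l ≤ l' → W'.levelsAbove l' = W.levelsAbove l' := by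
    intro l' hll'
    rw [EWSystem.levelsAbove, EWSystem.levelsAbove]
    congr 1
    ext x
    simp only [Finset.mem_filter]
    constructor
    · rintro ⟨hx, hx2⟩
      exact ⟨(memlev x (fun he => lt_irrefl l (hll'.trans_lt (he ▸ hx2)))).mpr hx, hx2⟩
    · rintro ⟨hx, hx2⟩
      exact ⟨(memlev x (fun he => lt_irrefl l (hll'.trans_lt (he ▸ hx2)))).mp hx, hx2⟩
  have chainB : ∀ l' : ℕ+, W.chainI r (W.levelsAbove l') = W'.chainI r (W'.levelsAbove l') := by
    intro l'
    by_cases hll : l ≤ l'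
    · rw [hla l' hll]
      apply hchain_nol
      intro h
      exact absurd (hll.trans_lt (mem_sort_filter h).2) (lt_irrefl l)
    · push_neg at hll
      set G : Finset ℕ+ := W.levels.filter (fun x => l' < x) with hGdef
      have hlG : l ∈ G := Finset.mem_filter.mpr ⟨hlW, hll⟩
      have hGF : G.filter (fun x => l < x) = F := by
        ext x
        simp only [hGdef, hFdef, Finset.filter_filter, Finset.mem_filter]
        exact ⟨fun ⟨a, b⟩ => ⟨a, b.2⟩, fun ⟨a, b⟩ => ⟨a, hll.trans b, b⟩⟩
      have hWla : W.levelsAbove l' =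
          (G.filter (· < l)).sort (· ≤ ·) ++ l :: T := by
        rw [EWSystem.levelsAbove, ← hGdef, sort_split G l hlG, hGF, ← hTF]
      set G' : Finset ℕ+ := W'.levels.filter (fun x => l' < x) with hG'def
      have hG'la : W'.levelsAbove l' = G'.sort (· ≤ ·) := rfl
      have hG'lt : G'.filter (· < l) = G.filter (· < l) := by
        ext x
        simp only [hGdef, hG'def, Finset.filter_filter, Finset.mem_filter]
        constructor
        · rintro ⟨hx, h2⟩
          exact ⟨(memlev x h2.2.ne).mpr hx, h2⟩
        · rintro ⟨hx, h2⟩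
          exact ⟨(memlev x h2.2.ne).mp hx, h2⟩
      have hG'gt : G'.filter (fun x => l < x) = F := by
        ext x
        simp only [hG'def, hFdef, Finset.filter_filter, Finset.mem_filter]
        constructor
        · rintro ⟨hx, _, h2⟩
          exact ⟨(memlev x h2.ne').mpr hx, h2⟩
        · rintro ⟨hx, h2⟩
          exact ⟨(memlev x h2.ne').mp hx, hll.trans h2, h2⟩
      by_cases hlW' : l ∈ W'.levels
      · have hlG' : l ∈ G' := Finset.mem_filter.mpr ⟨hlW', hll⟩
        have hW'la : W'.levelsAbove l' = (G.filter (· < l)).sort (· ≤ ·) ++ l :: T := by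
          rw [hG'la, sort_split G' l hlG', hG'gt, hG'lt, ← hTF]
        rw [hWla, hW'la]
        apply chainGen
        · intro h
          exact lt_irrefl l (mem_sort_filter h).2
        · rw [hchain_lT]
          show _ = EWSystem.argOn r (W'.levelCostI l) (W'.chainI r T)
          rw [hCT, hargl]
      · have hlG' : l ∉ G' := fun h => hlW' (Finset.mem_filter.mp h).1
        have hW'la : W'.levelsAbove l' = (G.filter (· < l)).sort (· ≤ ·) ++ T := by
          rw [hG'la, sort_split_no G' l hlG', hG'gt, hG'lt, ← hTF]
        rw [hWla, hW'la]
        apply chainGen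
        · intro h
          exact lt_irrefl l (mem_sort_filter h).2
        · rw [hchain_lT, hargC hlW', hCT]
  -- per-level optimality equivalences
  have hLopt_ne : ∀ l' : ℕ+, l' ≠ l → ∀ J, (W.LOptI r l' J ↔ W'.LOptI r l' J) := by
    intro l' hl' J
    show J ∈ EWSystem.argOn r (W.levelCostI l') (W.chainI r (W.levelsAbove l')) ↔
      J ∈ EWSystem.argOn r (W'.levelCostI l') (W'.chainI r (W'.levelsAbove l'))
    rw [hlc_ne l' hl', chainB l']
  have hLopt_l : l ∈ W'.levels → ∀ J, (W.LOptI r l J ↔ W'.LOptI r l J) := by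
    intro _ J
    show J ∈ EWSystem.argOn r (W.levelCostI l) (W.chainI r (W.levelsAbove l)) ↔
      J ∈ EWSystem.argOn r (W'.levelCostI l) (W'.chainI r (W'.levelsAbove l))
    rw [hla l le_rfl, ← hTdef, hCT, ← hCdef, hargl]
  intro I0
  constructor
  · rintro ⟨hmod, hopt⟩
    refine ⟨hmod, fun l' hl' => ?_⟩
    have hl'W : l' ∈ W.levels := by rw [hlev]; exact Finset.mem_union_left _ hl'
    by_cases h : l' = l
    · rw [h] at hl' hl'W ⊢
      exact (hLopt_l hl' I0).mp (hopt l hl'W)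
    · exact (hLopt_ne l' h I0).mp (hopt l' hl'W)
  · rintro ⟨hmod, hopt⟩
    have hmodW : W.IsModel I0 := hmod
    refine ⟨hmodW, fun l' hl' => ?_⟩
    by_cases h : l' = l
    · rw [h] at hl' ⊢
      by_cases hlW' : l ∈ W'.levels
      · exact (hLopt_l hlW' I0).mpr (hopt l hlW')
      · have hI0C : I0 ∈ C := by
          by_cases hF : F.Nonempty
          · have hmF : F.min' hF ∈ F := F.min'_mem hF
            have hml : l < F.min' hF := (Finset.mem_filter.mp hmF).2
            have hmW : F.min' hF ∈ W.levels := (Finset.mem_filter.mp hmF).1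
            have hmW' : F.min' hF ∈ W'.levels := (memlev _ hml.ne').mp hmW
            have hmem : I0 ∈ EWSystem.argOn r (W'.levelCostI (F.min' hF))
                (W'.chainI r (W'.levelsAbove (F.min' hF))) := hopt _ hmW'
            rw [hCdef, hTsucc hF]
            show I0 ∈ EWSystem.argOn r (W.levelCostI (F.min' hF))
              (W.chainI r (W.levelsAbove (F.min' hF)))
            rw [hlc_ne _ hml.ne', chainB]
            exact hmem
          · rw [hCdef, hTemp hF]
            exact hmodW
        show I0 ∈ EWSystem.argOn r (W.levelCostI l) (W.chainI r (W.levelsAbove l))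
        rw [← hTdef, ← hCdef, hargC hlW']
        exact hI0C
    · have hl'W' : l' ∈ W'.levels := (memlev l' h).mp hl'
      exact (hLopt_ne l' h I0).mpr (hopt l' hl'W')
end
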